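/- arXiv:1910.02174 — 3 statements merged into one kernel-verified Lean document; each statement's English description precedes it below -/
import Mathlib

section
/- Let C be an extension-closed pseudovariety of finite groups and let A, B be residually-C groups with B ∈ C (in particular B finite). Then the restricted wreath product A ≀ B is residually-C. -/
open Function SemidirectProduct

def restrictedBase (A B : Type*) [Group A] [Group B] : Subgroup (B → A) where
  carrier := {f | (mulSupport f).Finite}
  one_mem' := by simp
  mul_mem' := fun {f g} hf hg => (hf.union hg).subset (mulSupport_mul f g)
  inv_mem' := fun {f} hf => by simpa using hf

lemma shift_finite (A B : Type*) [Group A] [Group B] (b : B) {f : B → A}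
    (hf : (mulSupport f).Finite) : (mulSupport fun x => f (b⁻¹ * x)).Finite := by
  apply (hf.image (fun x => b * x)).subset
  intro x hx
  exact ⟨b⁻¹ * x, hx, by simp⟩

def wreathAut (A B : Type*) [Group A] [Group B] (b : B) : MulAut (restrictedBase A B) where
  toFun f := ⟨fun x => (f : B → A) (b⁻¹ * x), shift_finite A B b f.2⟩
  invFun f := ⟨fun x => (f : B → A) (b * x), by
    have h := shift_finite A B b⁻¹ f.2; simp only [inv_inv] at h; exact h⟩
  left_inv f := Subtype.ext (funext fun x => by simp)
  right_inv f := Subtype.ext (funext fun x => by simp)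
  map_mul' f g := rfl

def wreathHom (A B : Type*) [Group A] [Group B] : B →* MulAut (restrictedBase A B) where
  toFun := wreathAut A B
  map_one' := by
    ext f x
    simp [wreathAut]
  map_mul' b c := by
    ext f x
    simp [wreathAut, mul_assoc]

abbrev Wreath (A B : Type*) [Group A] [Group B] :=
  restrictedBase A B ⋊[wreathHom A B] B

structure Pseudovariety (C : (G : Type) → [_inst : Group G] → Prop) : Prop where
  finite : ∀ (G : Type) [Group G], C G → Finite G
  iso_closed : ∀ (G H : Type) [Group G] [Group H], (G ≃* H) → C G → C H
  subgroup_closed : ∀ (G : Type) [Group G], C G → ∀ H : Subgroup G, C H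
  prod_closed : ∀ (G H : Type) [Group G] [Group H], C G → C H → C (G × H)
  quot_closed : ∀ (G : Type) [Group G] (N : Subgroup G) [N.Normal], C G → C (G ⧸ N)
  ext_closed : ∀ (G : Type) [Group G] (N : Subgroup G) [N.Normal], C N → C (G ⧸ N) → C G

def ResiduallyC (C : (G : Type) → [_inst : Group G] → Prop) (G : Type*) [Group G] : Prop :=
  ∀ g : G, g ≠ 1 → ∃ (Q : Type) (_ : Group Q) (φ : G →* Q),
    C Q ∧ Function.Surjective φ ∧ φ g ≠ 1

def CSeparable (C : (G : Type) → [_inst : Group G] → Prop) {G : Type*} [Group G]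
    (X : Set G) : Prop :=
  ∀ g : G, g ∉ X → ∃ (Q : Type) (_ : Group Q) (φ : G →* Q),
    C Q ∧ Function.Surjective φ ∧ ∀ x ∈ X, φ g ≠ φ x

def COpen (C : (G : Type) → [_inst : Group G] → Prop) {G : Type} [Group G]
    (H : Subgroup G) : Prop :=
  ∃ N : Subgroup G, ∃ _ : N.Normal, N ≤ H ∧ C (G ⧸ N)

noncomputable def depthC (C : (G : Type) → [_inst : Group G] → Prop)
    (G : Type) [Group G] (X : Set G) (h : G) : ℕ :=
  sInf {n : ℕ | ∃ N : Subgroup G, ∃ _ : N.Normal, C (G ⧸ N) ∧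
    (∀ x ∈ X, (QuotientGroup.mk h : G ⧸ N) ≠ QuotientGroup.mk x) ∧ N.index = n}

def CConjSep (C : (G : Type) → [_inst : Group G] → Prop) (G : Type*) [Group G] : Prop :=
  ∀ g : G, CSeparable C {x : G | ∃ w : G, w * g * w⁻¹ = x}

section Aux

variable (C : (G : Type) → [_inst : Group G] → Prop)

lemma triv_mem (hC : Pseudovariety C) (B : Type) [Group B] (hB : C B)
    (Q : Type) [Group Q] [Subsingleton Q] : C Q := by
  have h1 : C (B ⧸ (⊤ : Subgroup B)) := hC.quot_closed B ⊤ hB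
  haveI := QuotientGroup.subsingleton_quotient_top (G := B)
  haveI : Unique (B ⧸ (⊤ : Subgroup B)) :=
    ⟨⟨1⟩, fun a => Subsingleton.elim a 1⟩
  haveI : Unique Q := ⟨⟨1⟩, fun a => Subsingleton.elim a 1⟩
  exact hC.iso_closed _ _ (MulEquiv.ofUnique) h1

/-- `Option ι → Q` is multiplicatively the same as `Q × (ι → Q)`. -/
def optionPiMulEquiv (ι Q : Type*) [Group Q] : (Option ι → Q) ≃* Q × (ι → Q) :=
  { Equiv.piOptionEquivProd (β := fun _ => Q) with map_mul' := fun _ _ => rfl }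

lemma pi_mem (hC : Pseudovariety C) (B : Type) [Group B] (hB : C B)
    (ι : Type) [Finite ι] (Q : Type) [Group Q] (hQ : C Q) : C (ι → Q) := by
  refine Finite.induction_empty_option (P := fun ι => C (ι → Q)) ?_ ?_ ?_ ι
  · intro α β e h
    exact hC.iso_closed _ _ (MulEquiv.arrowCongr e (MulEquiv.refl Q)) h
  · haveI : Subsingleton (PEmpty → Q) := ⟨fun f g => funext fun x => x.elim⟩
    exact triv_mem C hC B hB _
  · intro α _ ih
    exact hC.iso_closed _ _ (optionPiMulEquiv α Q).symm (hC.prod_closed _ _ hQ ih)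

lemma wreath_mem (hC : Pseudovariety C) (B : Type) [Group B] (hB : C B)
    (Q : Type) [Group Q] (hQ : C Q) : C (Wreath Q B) := by
  haveI : Finite B := hC.finite B hB
  have hpi : C (B → Q) := pi_mem C hC B hB B Q hQ
  have hbase : C (restrictedBase Q B) := hC.subgroup_closed _ hpi _
  refine hC.ext_closed _ (rightHom : Wreath Q B →* B).ker ?_ ?_
  · have e1 : restrictedBase Q B ≃* ((inl : restrictedBase Q B →* Wreath Q B)).range :=
      MonoidHom.ofInjective inl_injective
    have e2 : ((inl : restrictedBase Q B →* Wreath Q B)).range ≃*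
        ((rightHom : Wreath Q B →* B).ker) :=
      MulEquiv.subgroupCongr range_inl_eq_ker_rightHom
    exact hC.iso_closed _ _ (e1.trans e2) hbase
  · exact hC.iso_closed _ _
      (QuotientGroup.quotientKerEquivOfSurjective _ rightHom_surjective).symm hB

end Aux

/-- If `A`, `B` are residually-`C` and `B ∈ C` (hence finite), then the
restricted wreath product `A ≀ B` is residually-`C`. -/
theorem stmt6 (C : (G : Type) → [_inst : Group G] → Prop) (hC : Pseudovariety C)
    (A : Type*) (B : Type) [Group A] [Group B]
    (hA : ResiduallyC C A) (hB : ResiduallyC C B) (hBC : C B) :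
    ResiduallyC C (Wreath A B) := by
  haveI : Finite B := hC.finite B hBC
  intro g hg
  by_cases hb : g.right = 1
  · have hf : g.left ≠ 1 := by
      intro h
      exact hg (SemidirectProduct.ext h hb)
    obtain ⟨x, hx⟩ : ∃ x, (g.left : B → A) x ≠ 1 := by
      by_contra h
      push_neg at h
      exact hf (Subtype.ext (funext fun y => h y))
    obtain ⟨Q, _, φ, hQC, hφs, hφx⟩ := hA ((g.left : B → A) x) hx
    let baseMap : restrictedBase A B →* restrictedBase Q B :=
      { toFun := fun f => ⟨fun y => φ ((f : B → A) y), Set.toFinite _⟩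
        map_one' := by ext y; simp
        map_mul' := fun f g => by ext y; simp }
    have hcomm : ∀ b : B,
        baseMap.comp (wreathHom A B b).toMonoidHom =
          (wreathHom Q B b).toMonoidHom.comp baseMap := fun b => rfl
    let Φ : Wreath A B →* Wreath Q B :=
      SemidirectProduct.map baseMap (MonoidHom.id B) hcomm
    refine ⟨Wreath Q B, inferInstance, Φ, wreath_mem C hC B hBC Q hQC, ?_, ?_⟩
    · rintro ⟨n, b⟩
      refine ⟨⟨⟨fun y => Classical.choose (hφs ((n : B → Q) y)), Set.toFinite _⟩, b⟩, ?_⟩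
      refine SemidirectProduct.ext ?_ rfl
      exact Subtype.ext (funext fun y => Classical.choose_spec (hφs ((n : B → Q) y)))
    · intro h
      have := congrArg SemidirectProduct.left h
      have h2 := congrArg (fun f : restrictedBase Q B => (f : B → Q) x) this
      simpa [Φ, baseMap] using (hφx h2)
  · exact ⟨B, inferInstance, rightHom, hBC, rightHom_surjective, hb⟩
end

section
/- Let C be an extension-closed pseudovariety of finite groups and let A, B be residually-C groups with B infinite. Then the restricted wreath product A ≀ B is residually-C if and only if A is abelian. -/
open Function SemidirectProduct

section Aux

open scoped Classical

variable {C : (G : Type) → [_inst : Group G] → Prop}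

lemma pv_triv (hC : Pseudovariety C) {Q : Type} [Group Q] (hQ : C Q)
    (T : Type) [Group T] [Subsingleton T] : C T := by
  haveI : Unique T := ⟨⟨1⟩, fun a => Subsingleton.elim a 1⟩
  haveI : Unique (⊥ : Subgroup Q) := inferInstance
  exact hC.iso_closed _ _ (MulEquiv.ofUnique (M := (⊥ : Subgroup Q)) (N := T))
    (hC.subgroup_closed Q hQ ⊥)

lemma pv_pi (hC : Pseudovariety C) {Q : Type} [Group Q] (hQ : C Q)
    (I : Type) [Finite I] : C (I → Q) := by
  have key : ∀ n, C (Fin n → Q) := by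
    intro n
    induction n with
    | zero => exact pv_triv hC hQ _
    | succ n ih =>
      refine hC.iso_closed (Q × (Fin n → Q)) _ ?_ (hC.prod_closed _ _ hQ ih)
      refine { toEquiv := Fin.consEquiv (fun _ => Q), map_mul' := ?_ }
      intro a b
      funext i
      cases i using Fin.cases <;> simp [Fin.consEquiv]
  obtain ⟨n, ⟨e⟩⟩ := Finite.exists_equiv_fin I
  exact hC.iso_closed (Fin n → Q) (I → Q)
    (MulEquiv.arrowCongr e.symm (MulEquiv.refl Q)) (key n)

lemma pv_sep (hC : Pseudovariety C) {G : Type*} [Group G] (hG : ResiduallyC C G)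
    {Q₀ : Type} [Group Q₀] (φ₀ : G →* Q₀) (hQ₀ : C Q₀) (hs₀ : Function.Surjective φ₀)
    (T : Finset G) (hT : (1 : G) ∉ T) :
    ∃ (Q : Type) (_ : Group Q) (φ : G →* Q), C Q ∧ Function.Surjective φ ∧
      ∀ g ∈ T, φ g ≠ 1 := by
  revert hT
  induction T using Finset.induction_on with
  | empty => exact fun _ => ⟨Q₀, ‹_›, φ₀, hQ₀, hs₀, by simp⟩
  | insert _ _ hgT ih =>
    rename_i g T
    intro h1
    have hg1 : g ≠ 1 := fun h => h1 (by simp [h])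
    obtain ⟨Q₁, _, φ₁, hQ₁, hs₁, hne₁⟩ := hG g hg1
    obtain ⟨Q₂, _, φ₂, hQ₂, hs₂, hne₂⟩ := ih (fun h => h1 (Finset.mem_insert_of_mem h))
    refine ⟨(φ₁.prod φ₂).range, inferInstance, (φ₁.prod φ₂).rangeRestrict,
      hC.subgroup_closed _ (hC.prod_closed _ _ hQ₁ hQ₂) _,
      MonoidHom.rangeRestrict_surjective _, ?_⟩
    intro x hx hx1
    have : φ₁ x = 1 ∧ φ₂ x = 1 := by
      have := congrArg (Subtype.val) hx1
      simpa [MonoidHom.prod_apply, Prod.ext_iff] using this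
    rcases Finset.mem_insert.mp hx with rfl | hxT
    · exact hne₁ this.1
    · exact hne₂ x hxT this.2

end Aux
section Aux2

open scoped Classical

variable {C : (G : Type) → [_inst : Group G] → Prop}

lemma pv_wreath (hC : Pseudovariety C) {A₁ Qb : Type} [Group A₁] [Group Qb]
    [Finite A₁] [Finite Qb] (hA₁ : C A₁) (hQb : C Qb) : C (Wreath A₁ Qb) := by
  have hbase : C (restrictedBase A₁ Qb) :=
    hC.subgroup_closed _ (pv_pi hC hA₁ Qb) _
  have hN : ((inl : restrictedBase A₁ Qb →* Wreath A₁ Qb).range : Subgroup (Wreath A₁ Qb))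
      = (rightHom : Wreath A₁ Qb →* Qb).ker := range_inl_eq_ker_rightHom
  refine hC.ext_closed _ (rightHom : Wreath A₁ Qb →* Qb).ker ?_ ?_
  · exact hC.iso_closed _ _
      ((MonoidHom.ofInjective inl_injective).trans (MulEquiv.subgroupCongr hN)) hbase
  · exact hC.iso_closed Qb _
      (QuotientGroup.quotientKerEquivOfSurjective _ rightHom_surjective).symm hQb

noncomputable def deltaHom (A B : Type*) [Group A] [Group B] : A →* restrictedBase A B where
  toFun a := ⟨({1} : Set B).mulIndicator (fun _ => a), by
    apply (Set.finite_singleton (1 : B)).subset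
    rw [Set.mulSupport_mulIndicator]
    exact Set.inter_subset_left⟩
  map_one' := by
    apply Subtype.ext
    funext x
    show ({1} : Set B).mulIndicator (fun _ => (1:A)) x = 1
    simp
  map_mul' a b := by
    apply Subtype.ext
    funext x
    by_cases h : x ∈ ({1} : Set B) <;> simp only [Set.mem_singleton_iff] at h <;>
      simp [Set.mulIndicator_of_mem, Set.mulIndicator_of_notMem, h, Pi.mulSingle_apply]

lemma deltaHom_apply_one (A B : Type*) [Group A] [Group B] (a : A) :
    ((deltaHom A B a : restrictedBase A B) : B → A) 1 = a := by
  show ({1} : Set B).mulIndicator (fun _ => a) 1 = a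
  exact Set.mulIndicator_of_mem (Set.mem_singleton 1) (fun _ => a)

lemma deltaHom_apply_ne (A B : Type*) [Group A] [Group B] (a : A) {x : B} (hx : x ≠ 1) :
    ((deltaHom A B a : restrictedBase A B) : B → A) x = 1 := by
  show ({1} : Set B).mulIndicator (fun _ => a) x = 1
  exact Set.mulIndicator_of_notMem (by simpa using hx) (fun _ => a)

end Aux2
section FiberProd

open scoped Classical

variable {A B A₁ Qb : Type*} [Group A] [Group B] [CommGroup A₁] [Group Qb]
variable (φB : B →* Qb) (ψ : A →* A₁)

lemma supp_psi (f : restrictedBase A B) :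
    (mulSupport fun x => ψ ((f : B → A) x)).Finite := by
  apply f.2.subset
  intro x hx
  simp only [mem_mulSupport] at hx ⊢
  exact fun h => hx (by rw [h, map_one])

noncomputable def fiberProd : restrictedBase A B →* restrictedBase A₁ Qb where
  toFun f := ⟨fun q => ∏ᶠ x ∈ φB ⁻¹' {q}, ψ ((f : B → A) x), by
    apply (f.2.image φB).subset
    intro q hq
    rw [mem_mulSupport] at hq
    obtain ⟨x, hx1, hx2⟩ := exists_ne_one_of_finprod_mem_ne_one hq
    refine ⟨x, ?_, hx1⟩
    rw [mem_mulSupport]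
    exact fun h => hx2 (by rw [h, map_one])⟩
  map_one' := by
    apply Subtype.ext
    funext q
    exact finprod_mem_of_eqOn_one fun x _ => by simp [show ((1 : restrictedBase A B) : B → A) x = 1 from rfl]
  map_mul' f g := by
    apply Subtype.ext
    funext q
    show (∏ᶠ x ∈ φB ⁻¹' {q}, ψ ((f : B → A) x * (g : B → A) x)) = _
    simp only [map_mul]
    exact finprod_mem_mul_distrib' ((supp_psi ψ f).inter_of_right _)
      ((supp_psi ψ g).inter_of_right _)

lemma fiberProd_apply (f : restrictedBase A B) (q : Qb) :
    ((fiberProd φB ψ f : restrictedBase A₁ Qb) : Qb → A₁) q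
      = ∏ᶠ x ∈ φB ⁻¹' {q}, ψ ((f : B → A) x) := rfl

lemma fiberProd_equivariant (b : B) (f : restrictedBase A B) :
    fiberProd φB ψ ((wreathHom A B b) f)
      = (wreathHom A₁ Qb (φB b)) (fiberProd φB ψ f) := by
  apply Subtype.ext
  funext q
  show (∏ᶠ x ∈ φB ⁻¹' {q}, ψ ((f : B → A) (b⁻¹ * x)))
    = ∏ᶠ y ∈ φB ⁻¹' {(φB b)⁻¹ * q}, ψ ((f : B → A) y)
  rw [finprod_mem_def, finprod_mem_def]
  conv_lhs => rw [← finprod_comp_equiv (Equiv.mulLeft b)]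
  refine finprod_congr fun y => ?_
  simp only [Equiv.coe_mulLeft, Set.mulIndicator_apply, Set.mem_preimage,
    Set.mem_singleton_iff, map_mul, inv_mul_cancel_left]
  congr 1
  · rw [eq_iff_iff]
    constructor
    · intro h; rw [← h]; group
    · intro h; rw [h]; group
lemma fiberProd_sep (f : restrictedBase A B) (s : B) (hfs : (f : B → A) s ≠ 1)
    (hinj : Set.InjOn φB (mulSupport (f : B → A))) :
    ((fiberProd φB ψ f : restrictedBase A₁ Qb) : Qb → A₁) (φB s) = ψ ((f : B → A) s) := by
  rw [fiberProd_apply, finprod_mem_def]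
  rw [finprod_eq_single _ s]
  · exact Set.mulIndicator_of_mem (show s ∈ φB ⁻¹' {φB s} from rfl) fun x => ψ ((f : B → A) x)
  · intro x hx
    by_cases hm : x ∈ φB ⁻¹' {φB s}
    · rw [Set.mulIndicator_of_mem hm]
      by_cases hfx : (f : B → A) x = 1
      · rw [hfx, map_one]
      · exact absurd (hinj (mem_mulSupport.mpr hfx) (mem_mulSupport.mpr hfs) hm) hx
    · exact Set.mulIndicator_of_notMem hm _

lemma fiberProd_surjective [Finite Qb] (hψ : Surjective ψ) (hφ : Surjective φB) :
    Surjective (fiberProd φB ψ) := by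
  intro h
  set σ := surjInv hφ with hσ
  set ρ := surjInv hψ with hρ
  have hσe : ∀ q, φB (σ q) = q := fun q => surjInv_eq hφ q
  have hρe : ∀ a, ψ (ρ a) = a := fun a => surjInv_eq hψ a
  set F : B → A := fun x => if ∃ q : Qb, σ q = x then ρ ((h : Qb → A₁) (φB x)) else 1
    with hFdef
  have hF : (mulSupport F).Finite := by
    apply (Set.finite_range σ).subset
    intro x hx
    rw [mem_mulSupport] at hx
    by_contra hr
    exact hx (if_neg (by simpa [Set.range] using hr))
  refine ⟨⟨F, hF⟩, ?_⟩
  apply Subtype.ext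
  funext q
  rw [fiberProd_apply, finprod_mem_def]
  rw [finprod_eq_single _ (σ q)]
  · rw [Set.mulIndicator_of_mem (by simp [hσe] : σ q ∈ φB ⁻¹' {q})]
    show ψ (F (σ q)) = (h : Qb → A₁) q
    rw [hFdef]
    simp only []
    rw [if_pos ⟨q, rfl⟩, hσe, hρe]
  · intro x hx
    by_cases hm : x ∈ φB ⁻¹' {q}
    · rw [Set.mulIndicator_of_mem hm]
      show ψ (F x) = 1
      by_cases he : ∃ q' : Qb, σ q' = x
      · obtain ⟨q', rfl⟩ := he
        have hq' : q' = q := by simpa [hσe] using hm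
        exact absurd (by rw [hq']) hx
      · rw [hFdef]
        simp only []
        rw [if_neg he, map_one]
    · exact Set.mulIndicator_of_notMem hm _

end FiberProd
/-- If `A`, `B` are residually-`C` and `B` is infinite, then `A ≀ B` is
residually-`C` iff `A` is abelian. -/
theorem stmt7 (C : (G : Type) → [_inst : Group G] → Prop) (hC : Pseudovariety C)
    (A B : Type*) [Group A] [Group B] [Infinite B]
    (hA : ResiduallyC C A) (hB : ResiduallyC C B) :
    ResiduallyC C (Wreath A B) ↔ ∀ a₁ a₂ : A, a₁ * a₂ = a₂ * a₁ := by
  constructor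
  · -- Forward: residually-C implies abelian.
    intro hres a₁ a₂
    by_contra hne
    set k : A := a₁ * a₂ * a₁⁻¹ * a₂⁻¹ with hk
    have hk1 : k ≠ 1 := by
      intro h
      apply hne
      have h2 : (a₁ * a₂) * (a₂ * a₁)⁻¹ = 1 := by rw [← h, hk]; group
      exact mul_inv_eq_one.mp h2
    have hw : (inl (deltaHom A B k) : Wreath A B) ≠ 1 := by
      intro h
      have h2 : deltaHom A B k = 1 := inl_injective (by rw [h, map_one])
      apply hk1
      rw [← deltaHom_apply_one A B k, h2]
      rfl
    obtain ⟨Q, _, φ, hCQ, -, hφw⟩ := hres _ hw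
    haveI : Finite Q := hC.finite Q hCQ
    obtain ⟨x, y, hxy, hfeq⟩ := Finite.exists_ne_map_eq_of_infinite (fun b : B => φ (inr b))
    set b : B := x * y⁻¹ with hbdef
    have hb1 : b ≠ 1 := fun h => hxy (mul_inv_eq_one.mp h)
    have hφb : φ (inr b) = 1 := by
      rw [hbdef, map_mul, map_inv, map_mul, map_inv, hfeq]
      simp
    have hcomm : ∀ c d : A,
        (inl (deltaHom A B c) : Wreath A B) * (inr b * inl (deltaHom A B d) * (inr b)⁻¹)
          = (inr b * inl (deltaHom A B d) * (inr b)⁻¹) * inl (deltaHom A B c) := by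
      intro c d
      rw [← map_inv inr b, ← inl_aut, ← map_mul, ← map_mul]
      congr 1
      apply Subtype.ext
      funext x0
      show (deltaHom A B c : B → A) x0 * (deltaHom A B d : B → A) (b⁻¹ * x0)
        = (deltaHom A B d : B → A) (b⁻¹ * x0) * (deltaHom A B c : B → A) x0
      by_cases h1 : x0 = 1
      · subst h1
        rw [deltaHom_apply_ne A B d (by simpa using inv_ne_one.mpr hb1)]
        simp
      · rw [deltaHom_apply_ne A B c h1]
        simp
    have h1 : Commute (φ (inl (deltaHom A B a₁))) (φ (inl (deltaHom A B a₂))) := by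
      have h2 := congrArg φ (hcomm a₁ a₂)
      simp only [map_mul, map_inv, hφb, one_mul, mul_one, inv_one] at h2
      exact h2
    apply hφw
    have h3 : (inl (deltaHom A B k) : Wreath A B)
        = inl (deltaHom A B a₁) * inl (deltaHom A B a₂)
          * (inl (deltaHom A B a₁))⁻¹ * (inl (deltaHom A B a₂))⁻¹ := by
      rw [hk]
      simp only [map_mul, map_inv]
    rw [h3]
    simp only [map_mul, map_inv]
    rw [h1.eq]
    group
  · -- Backward: abelian implies residually-C.
    intro habel g hg
    by_cases hgr : g.right = 1
    case neg =>
      obtain ⟨Q, _, φq, hCQ, hsq, hneq⟩ := hB g.right hgr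
      exact ⟨Q, ‹_›, φq.comp rightHom, hCQ, hsq.comp rightHom_surjective, hneq⟩
    case pos =>
      set f : restrictedBase A B := g.left with hfdef
      have hgeq : g = inl f := by
        rw [← inl_left_mul_inr_right g, hgr, map_one, mul_one, hfdef]
      have hfne : f ≠ 1 := by
        intro h
        apply hg
        rw [hgeq, h, map_one]
      obtain ⟨s, hs⟩ : ∃ s : B, (f : B → A) s ≠ 1 := by
        by_contra h
        push_neg at h
        exact hfne (Subtype.ext (funext fun x => h x))
      obtain ⟨A₁, instA₁, ψ, hCA₁, hsψ, hψs⟩ := hA _ hs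
      letI : CommGroup A₁ :=
        { ‹Group A₁› with
          mul_comm := fun p q => by
            obtain ⟨u, rfl⟩ := hsψ p
            obtain ⟨v, rfl⟩ := hsψ q
            rw [← map_mul, ← map_mul, habel] }
      obtain ⟨b0, hb0⟩ : ∃ b0 : B, b0 ≠ 1 := exists_ne 1
      obtain ⟨Q₀, _, φ₀, hQ₀, hs₀, -⟩ := hB b0 hb0
      classical
      set S : Finset B := f.2.toFinset with hSdef
      set T : Finset B := ((S ×ˢ S).filter (fun p => p.1 ≠ p.2)).image (fun p => p.1 * p.2⁻¹)
        with hTdef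
      have hT1 : (1 : B) ∉ T := by
        rw [hTdef]
        simp only [Finset.mem_image, Finset.mem_filter, not_exists]
        rintro ⟨u, v⟩ ⟨⟨-, huv⟩, h1⟩
        exact huv (mul_inv_eq_one.mp h1)
      obtain ⟨Qb, instQb, φB, hCQb, hsB, hsep⟩ := pv_sep hC hB φ₀ hQ₀ hs₀ T hT1
      haveI : Finite Qb := hC.finite _ hCQb
      haveI : Finite A₁ := hC.finite _ hCA₁
      have hinj : Set.InjOn φB (mulSupport (f : B → A)) := by
        intro u hu v hv huv
        by_contra hne
        refine hsep (u * v⁻¹) ?_ ?_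
        · rw [hTdef]
          refine Finset.mem_image.mpr ⟨(u, v), ?_, rfl⟩
          rw [Finset.mem_filter, Finset.mem_product]
          exact ⟨⟨by rw [hSdef]; exact (Set.Finite.mem_toFinset _).mpr hu, by rw [hSdef]; exact (Set.Finite.mem_toFinset _).mpr hv⟩, hne⟩
        · rw [map_mul, map_inv, huv]
          simp
      have hcompat : ∀ b : B,
          ((inl : restrictedBase A₁ Qb →* Wreath A₁ Qb).comp (fiberProd φB ψ)).comp
              ((wreathHom A B) b).toMonoidHom
            = (MulAut.conj (((inr : Qb →* Wreath A₁ Qb).comp φB) b)).toMonoidHom.comp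
              ((inl : restrictedBase A₁ Qb →* Wreath A₁ Qb).comp (fiberProd φB ψ)) := by
        intro b
        refine MonoidHom.ext fun n => ?_
        show inl (fiberProd φB ψ ((wreathHom A B b) n))
          = MulAut.conj (inr (φB b)) (inl (fiberProd φB ψ n))
        rw [fiberProd_equivariant, MulAut.conj_apply, inl_aut, map_inv]
      set Φ : Wreath A B →* Wreath A₁ Qb :=
        SemidirectProduct.lift
          ((inl : restrictedBase A₁ Qb →* Wreath A₁ Qb).comp (fiberProd φB ψ))
          ((inr : Qb →* Wreath A₁ Qb).comp φB) hcompat with hΦdef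
      refine ⟨Wreath A₁ Qb, inferInstance, Φ, pv_wreath hC hCA₁ hCQb, ?_, ?_⟩
      · intro w
        obtain ⟨m, hm⟩ := fiberProd_surjective φB ψ hsψ hsB w.left
        obtain ⟨b, hb⟩ := hsB w.right
        refine ⟨inl m * inr b, ?_⟩
        rw [map_mul, hΦdef, lift_inl, lift_inr]
        show inl (fiberProd φB ψ m) * inr (φB b) = w
        rw [hm, hb, inl_left_mul_inr_right]
      · rw [hgeq, hΦdef, lift_inl]
        intro hcon
        show False
        have h2 : fiberProd φB ψ f = 1 := inl_injective (by
          rw [show ((inl : restrictedBase A₁ Qb →* Wreath A₁ Qb).comp (fiberProd φB ψ)) f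
            = inl (fiberProd φB ψ f) from rfl] at hcon
          rw [hcon, map_one])
        apply hψs
        rw [← fiberProd_sep φB ψ f s hs hinj, h2]
        rfl
end

section
/- Let A be an abelian group, B a group, b ∈ B, and f ∈ ⊕_B A with support {s₁,…,s_k}. Then there exists f' ∈ ⊕_B A such that f'b is conjugate to fb by an element of the base group ⊕_B A, and the elements of supp(f') lie in pairwise distinct right cosets of ⟨b⟩ in B. -/
open Function SemidirectProduct

section Main
variable {A B : Type*} [CommGroup A] [Group B]

/-- The support condition: support of `f` meets each right coset of `⟨b⟩` at most once. -/
def GoodSupp (b : B) (f : restrictedBase A B) : Prop :=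
  ∀ x ∈ Function.mulSupport (f : B → A), ∀ y ∈ Function.mulSupport (f : B → A),
    (∃ i : ℤ, x = b ^ i * y) → x = y

lemma conj_apply (b : B) (h f : restrictedBase A B) (z : B) :
    ((h * f * (wreathHom A B b) h⁻¹ : restrictedBase A B) : B → A) z
      = (h : B → A) z * (f : B → A) z * ((h : B → A) (b⁻¹ * z))⁻¹ := rfl

lemma main_lemma (b : B) (n : ℕ) (f : restrictedBase A B)
    (hn : f.2.toFinset.card ≤ n) :
    ∃ h : restrictedBase A B, GoodSupp b (h * f * (wreathHom A B b) h⁻¹) := by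
  classical
  induction n generalizing f with
  | zero =>
    have hf1 : f = 1 := by
      apply Subtype.ext
      funext z
      by_contra hz
      have hm : z ∈ f.2.toFinset := f.2.mem_toFinset.mpr hz
      rw [Finset.card_eq_zero.mp (Nat.le_zero.mp hn)] at hm
      simp at hm
    refine ⟨1, ?_⟩
    have he : ((1 : restrictedBase A B) * f * (wreathHom A B b) 1⁻¹) = 1 := by
      rw [hf1]; simp
    rw [he]
    intro x hx
    simp at hx
  | succ n ih =>
    by_cases hg : GoodSupp b f
    · refine ⟨1, ?_⟩
      have he : ((1 : restrictedBase A B) * f * (wreathHom A B b) 1⁻¹) = f := by simp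
      rw [he]; exact hg
    · obtain ⟨x, hx, y, hy, ⟨i, hxy0⟩, hne0⟩ : ∃ x ∈ mulSupport (f : B → A),
          ∃ y ∈ mulSupport (f : B → A), (∃ i : ℤ, x = b ^ i * y) ∧ x ≠ y := by
        simp only [GoodSupp, not_forall] at hg
        obtain ⟨x, hx, y, hy, hi, hne⟩ := hg
        exact ⟨x, hx, y, hy, hi, hne⟩
      obtain ⟨x, hx, y, hy, hne, k₀, hk₀, hxy⟩ : ∃ x ∈ mulSupport (f : B → A),
          ∃ y ∈ mulSupport (f : B → A), x ≠ y ∧ ∃ k : ℕ, 0 < k ∧ x = b ^ k * y := by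
        rcases lt_trichotomy i 0 with hi | hi | hi
        · refine ⟨y, hy, x, hx, hne0.symm, (-i).toNat, by omega, ?_⟩
          have h2 : b ^ ((-i).toNat : ℤ) * x = b ^ (-i) * (b ^ i * y) := by
            rw [Int.toNat_of_nonneg (by omega), hxy0]
          rw [← zpow_natCast, h2, ← mul_assoc, ← zpow_add]
          simp
        · exact absurd (by simpa [hi] using hxy0) hne0
        · refine ⟨x, hx, y, hy, hne0, i.toNat, by omega, ?_⟩
          rw [hxy0, ← zpow_natCast, Int.toNat_of_nonneg (by omega)]
      clear hxy0 hne0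
      have hex : ∃ k : ℕ, 0 < k ∧ x = b ^ k * y := ⟨k₀, hk₀, hxy⟩
      set k := Nat.find hex with hkdef
      obtain ⟨hkpos, hk⟩ : 0 < k ∧ x = b ^ k * y := Nat.find_spec hex
      have hmin : ∀ j < k, ¬(0 < j ∧ x = b ^ j * y) := fun j hj => Nat.find_min hex hj
      have hpow : ∀ j, 0 < j → j ≤ k → b ^ j ≠ 1 := by
        intro j hj hjk hbj
        rcases Nat.lt_or_ge j k with hlt | hge
        · refine hmin (k - j) (by omega) ⟨by omega, ?_⟩
          have h3 : x = b ^ (k - j) * (b ^ j * y) := by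
            rw [← mul_assoc, ← pow_add]
            rwa [Nat.sub_add_cancel hjk]
          simpa [hbj] using h3
        · have hjk' : j = k := by omega
          rw [hjk'] at hbj
          exact hne (by simpa [hbj] using hk)
      set S : Finset B := (Finset.Icc 1 k).image (fun j => (b ^ j)⁻¹ * x) with hSdef
      have hxS : x ∉ S := by
        intro hmem
        obtain ⟨j, hj, hjx⟩ := Finset.mem_image.mp hmem
        rw [Finset.mem_Icc] at hj
        have h1 : (b ^ j)⁻¹ * x = 1 * x := by rw [one_mul]; exact hjx
        exact hpow j hj.1 hj.2 (inv_eq_one.mp (mul_right_cancel h1))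
      set hfun : B → A := fun z => if z ∈ S then (f : B → A) x else 1 with hfundef
      have hfin : (mulSupport hfun).Finite := by
        apply S.finite_toSet.subset
        intro z hz
        by_contra hzS
        rw [mulSupport, Set.mem_setOf_eq] at hz
        exact hz (if_neg (fun hmem => hzS (Finset.mem_coe.mpr hmem)))
      set h₁ : restrictedBase A B := ⟨hfun, hfin⟩ with h₁def
      set f₁ : restrictedBase A B := h₁ * f * (wreathHom A B b) h₁⁻¹ with hf₁def
      have hmemS : ∀ j, 1 ≤ j → j ≤ k → (b ^ j)⁻¹ * x ∈ S := fun j h1 h2 =>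
        Finset.mem_image.mpr ⟨j, Finset.mem_Icc.mpr ⟨h1, h2⟩, rfl⟩
      have key : mulSupport (f₁ : B → A) ⊆ mulSupport (f : B → A) \ {x} := by
        intro z hz
        rw [mulSupport, Set.mem_setOf_eq, hf₁def, conj_apply] at hz
        have hzx : z ≠ x := by
          intro hzx
          subst hzx
          have h1 : hfun z = 1 := if_neg hxS
          have h2 : hfun (b⁻¹ * z) = (f : B → A) z := by
            have hm : b⁻¹ * z ∈ S := by
              have := hmemS 1 le_rfl hkpos
              simpa using this
            exact if_pos hm
          apply hz
          show hfun z * (f : B → A) z * (hfun (b⁻¹ * z))⁻¹ = 1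
          rw [h1, h2, one_mul, mul_inv_cancel]
        refine ⟨?_, hzx⟩
        by_contra hfz
        rw [mulSupport, Set.mem_setOf_eq, not_not] at hfz
        apply hz
        show hfun z * (f : B → A) z * (hfun (b⁻¹ * z))⁻¹ = 1
        rw [hfz, mul_one]
        by_cases hzS : z ∈ S
        · -- z ∈ S
          obtain ⟨j, hj, hjz⟩ := Finset.mem_image.mp hzS
          rw [Finset.mem_Icc] at hj
          rcases Nat.eq_or_lt_of_le hj.2 with h2 | h2
          · -- j = k : z = y ∈ supp f, contradiction with f z = 1
            exfalso
            have hzy : z = y := by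
              rw [← hjz, h2, hk, inv_mul_cancel_left]
            rw [hzy] at hfz
            exact hy hfz
          · -- j < k : b⁻¹ z ∈ S too
            have hbz : b⁻¹ * z ∈ S := by
              have he : b⁻¹ * z = (b ^ (j+1))⁻¹ * x := by
                rw [← hjz]
                simp [pow_succ, mul_inv_rev, mul_assoc]
              rw [he]
              exact hmemS (j+1) (by omega) (by omega)
            simp only [hfundef]
            rw [if_pos hzS, if_pos hbz, mul_inv_cancel]
        · -- z ∉ S, show b⁻¹ * z ∉ S
          have hbz : b⁻¹ * z ∉ S := by
            intro hmem
            obtain ⟨j, hj, hjz⟩ := Finset.mem_image.mp hmem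
            rw [Finset.mem_Icc] at hj
            have hzeq : z = b * ((b ^ j)⁻¹ * x) := by
              rw [hjz, mul_inv_cancel_left]
            rcases Nat.eq_or_lt_of_le hj.1 with h1 | h1
            · have hzx' : z = x := by
                rw [hzeq, ← h1, pow_one, mul_inv_cancel_left]
              rw [hzx'] at hfz
              exact hx hfz
            · apply hzS
              have he : z = (b ^ (j-1))⁻¹ * x := by
                have hj' : b ^ j = b ^ (j-1) * b := by
                  rw [← pow_succ]
                  congr 1
                  omega
                rw [hzeq, hj', mul_inv_rev]
                simp [mul_assoc]
              rw [he]
              exact hmemS (j-1) (by omega) (by omega)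
          simp only [hfundef]
          rw [if_neg hzS, if_neg hbz, mul_inv_cancel]
      have hcard : f₁.2.toFinset.card ≤ n := by
        have hsub : f₁.2.toFinset ⊆ f.2.toFinset.erase x := by
          intro z hz
          have hz := f₁.2.mem_toFinset.mp hz
          have hk2 := key hz
          rw [Finset.mem_erase]
          exact ⟨hk2.2, f.2.mem_toFinset.mpr hk2.1⟩
        have hxmem : x ∈ f.2.toFinset := f.2.mem_toFinset.mpr hx
        have hle := Finset.card_le_card hsub
        rw [Finset.card_erase_of_mem hxmem] at hle
        omega
      obtain ⟨h₂, hh₂⟩ := ih f₁ hcard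
      refine ⟨h₂ * h₁, ?_⟩
      have he : h₂ * h₁ * f * (wreathHom A B b) (h₂ * h₁)⁻¹
          = h₂ * f₁ * (wreathHom A B b) h₂⁻¹ := by
        rw [hf₁def]
        simp [mul_assoc, mul_inv_rev, map_mul]
      rw [he]
      exact hh₂

end Main

/-- `A` abelian. For any `f` in the base group and `b ∈ B` there is `f'`
in the base group such that `f'b` is conjugate to `fb` by a base-group element, and the
support of `f'` meets each right coset of `⟨b⟩` at most once. -/
theorem stmt11 (A B : Type*) [CommGroup A] [Group B] (b : B) (f : restrictedBase A B) :
    ∃ f' : restrictedBase A B,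
      (∃ h : restrictedBase A B,
          (SemidirectProduct.inl h : Wreath A B) *
              (SemidirectProduct.inl f * SemidirectProduct.inr b) *
              (SemidirectProduct.inl h : Wreath A B)⁻¹
            = SemidirectProduct.inl f' * SemidirectProduct.inr b) ∧
      ∀ x ∈ Function.mulSupport (f' : B → A), ∀ y ∈ Function.mulSupport (f' : B → A),
        (∃ i : ℤ, x = b ^ i * y) → x = y := by
  obtain ⟨h, hh⟩ := main_lemma b f.2.toFinset.card f le_rfl
  refine ⟨h * f * (wreathHom A B b) h⁻¹, ⟨h, ?_⟩, hh⟩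
  ext <;> simp
end
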